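/- Let S(t) = ∑_{j=1}^k a_j e^{2πi ω_j t} with distinct integer frequencies ω_j ∈ [−N/2, N/2) ∩ ℤ and nonzero complex coefficients a_j, where N > 1 is an integer. Let p > 1 be an integer, h ∈ {0,…,p−1}, and let ε be an irrational real number. If |I(S,h;p)| > 1, then there exists an integer m with 1 ≤ m ≤ q² − q, where q = |I(S,h;p)|, such that |Ŝ_{p,mε}[h]| ≠ |Ŝ_p[h]|. -/

import Mathlib

/-- The index set `I(S,h;p)` of frequencies congruent to `h` modulo `p`. -/
def aliasIdx {k : ℕ} (ω : Fin k → ℤ) (p h : ℕ) : Finset (Fin k) :=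
  Finset.univ.filter (fun j => ω j ≡ (h : ℤ) [ZMOD (p : ℤ)])

/-- The signal `S(t) = ∑ j, a j * exp(2πi ω_j t)`. -/
noncomputable def signal {k : ℕ} (a : Fin k → ℂ) (ω : Fin k → ℤ) (t : ℝ) : ℂ :=
  ∑ j, a j * Complex.exp (2 * (Real.pi : ℂ) * Complex.I * (ω j : ℂ) * (t : ℂ))

/-- The shifted sub-sampled DFT `Ŝ_{p,ε}[h]`. -/
noncomputable def sdft {k : ℕ} (a : Fin k → ℂ) (ω : Fin k → ℤ) (p : ℕ) (ε : ℝ) (h : ℕ) : ℂ :=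
  ∑ n ∈ Finset.range p,
    signal a ω ((n : ℝ) / (p : ℝ) + ε) *
      Complex.exp (-(2 * (Real.pi : ℂ) * Complex.I) * (n : ℂ) * (h : ℂ) / (p : ℂ))
open Complex Finset

noncomputable def E (x : ℝ) : ℂ := Complex.exp (2 * (Real.pi : ℂ) * Complex.I * x)

lemma E_add (x y : ℝ) : E (x + y) = E x * E y := by
  rw [E, E, E, ← Complex.exp_add]; push_cast; ring_nf

lemma E_zero : E 0 = 1 := by simp [E]

lemma E_int (d : ℤ) : E (d : ℝ) = 1 := by
  rw [E]
  have := Complex.exp_int_mul_two_pi_mul_I d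
  rw [← this]; congr 1; push_cast; ring

lemma E_nat_mul (n : ℕ) (x : ℝ) : E ((n : ℝ) * x) = E x ^ n := by
  rw [E, E, ← Complex.exp_nat_mul]; congr 1; push_cast; ring

lemma E_conj (x : ℝ) : (starRingEnd ℂ) (E x) = E (-x) := by
  rw [E, E, ← Complex.exp_conj]; congr 1
  simp only [map_mul, Complex.conj_I, Complex.conj_ofReal, map_ofNat]
  push_cast; ring

lemma two_pi_I_ne : (2 * (Real.pi : ℂ) * Complex.I) ≠ 0 := by
  simp [Complex.ofReal_ne_zero, Real.pi_ne_zero, Complex.I_ne_zero]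

lemma E_eq_one_iff {x : ℝ} : E x = 1 ↔ ∃ n : ℤ, x = n := by
  rw [E, Complex.exp_eq_one_iff]
  constructor
  · rintro ⟨n, hn⟩
    refine ⟨n, ?_⟩
    have : (x : ℂ) = (n : ℂ) := by
      apply mul_left_cancel₀ two_pi_I_ne
      rw [hn]; ring
    exact_mod_cast this
  · rintro ⟨n, rfl⟩
    exact ⟨n, by push_cast; ring⟩

lemma geomE (p : ℕ) (hp : 0 < p) (d : ℤ) :
    ∑ n ∈ Finset.range p, E ((d : ℝ) * n / p) = if (p : ℤ) ∣ d then (p : ℂ) else 0 := by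
  have hp0 : (p : ℝ) ≠ 0 := Nat.cast_ne_zero.mpr hp.ne'
  have key : ∀ n : ℕ, E ((d : ℝ) * n / p) = (E ((d : ℝ) / p)) ^ n := by
    intro n
    rw [← E_nat_mul]; congr 1; ring
  simp_rw [key]
  by_cases hdvd : (p : ℤ) ∣ d
  · obtain ⟨t, rfl⟩ := hdvd
    have : ((p * t : ℤ) : ℝ) / p = (t : ℝ) := by push_cast; field_simp
    rw [this, E_int, if_pos ⟨t, rfl⟩]
    simp
  · rw [if_neg hdvd]
    have hne : E ((d : ℝ) / p) ≠ 1 := by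
      rw [Ne, E_eq_one_iff]
      rintro ⟨n, hn⟩
      apply hdvd
      refine ⟨n, ?_⟩
      have : (d : ℝ) = p * n := by field_simp at hn; linarith [hn]
      exact_mod_cast this
    rw [geom_sum_eq hne]
    have hpow : E ((d : ℝ) / p) ^ p = 1 := by
      rw [← E_nat_mul]
      have : (p : ℝ) * ((d : ℝ) / p) = (d : ℝ) := by field_simp
      rw [this, E_int]
    rw [hpow]; simp



lemma sdft_eq {k : ℕ} (a : Fin k → ℂ) (ω : Fin k → ℤ) (p : ℕ) (hp : 0 < p) (ε : ℝ) (h : ℕ) :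
    sdft a ω p ε h = p * ∑ j ∈ aliasIdx ω p h, a j * E ((ω j : ℝ) * ε) := by
  unfold sdft signal
  simp_rw [Finset.sum_mul]
  rw [Finset.sum_comm]
  have step : ∀ j : Fin k, ∑ n ∈ Finset.range p,
      a j * Complex.exp (2 * (Real.pi : ℂ) * Complex.I * (ω j : ℂ) * (((n : ℝ) / (p : ℝ) + ε : ℝ) : ℂ)) *
        Complex.exp (-(2 * (Real.pi : ℂ) * Complex.I) * (n : ℂ) * (h : ℂ) / (p : ℂ))
      = a j * E ((ω j : ℝ) * ε) * ∑ n ∈ Finset.range p, E ((((ω j - h : ℤ)) : ℝ) * n / p) := by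
    intro j
    rw [Finset.mul_sum]
    refine Finset.sum_congr rfl fun n _ => ?_
    rw [E, E]
    rw [mul_assoc (a j), ← Complex.exp_add, mul_assoc (a j), ← Complex.exp_add]
    congr 2
    push_cast
    ring
  simp_rw [step]
  simp_rw [geomE p hp]
  have hcond : ∀ j : Fin k, ((p : ℤ) ∣ (ω j - h)) ↔ (ω j ≡ (h : ℤ) [ZMOD (p : ℤ)]) := by
    intro j
    rw [Int.modEq_iff_dvd, dvd_sub_comm]
  rw [Finset.mul_sum]
  unfold aliasIdx
  rw [Finset.sum_filter]
  refine Finset.sum_congr rfl fun j _ => ?_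
  by_cases hj : ω j ≡ (h : ℤ) [ZMOD (p : ℤ)]
  · rw [if_pos ((hcond j).mpr hj), if_pos hj]; ring
  · rw [if_neg (fun hd => hj ((hcond j).mp hd)), if_neg hj]; ring

theorem stmt18 {k : ℕ} (a : Fin k → ℂ) (ω : Fin k → ℤ) (hω : Function.Injective ω)
    (ha : ∀ j, a j ≠ 0) (N : ℕ) (hN : 1 < N)
    (hrange : ∀ j, -(N : ℤ) ≤ 2 * ω j ∧ 2 * ω j < (N : ℤ))
    (p : ℕ) (hp : 1 < p) (h : ℕ) (hh : h < p)
    (ε : ℝ) (hε : Irrational ε) (hq : 1 < (aliasIdx ω p h).card) :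
    ∃ m : ℕ, 1 ≤ m ∧ m ≤ (aliasIdx ω p h).card ^ 2 - (aliasIdx ω p h).card ∧
      ‖sdft a ω p ((m : ℝ) * ε) h‖ ≠ ‖sdft a ω p 0 h‖ := by
  by_contra hcon
  push_neg at hcon
  set I : Finset (Fin k) := aliasIdx ω p h with hIdef
  set q : ℕ := I.card with hqdef
  set M : ℕ := q ^ 2 - q with hMdef
  have hp0 : 0 < p := lt_trans one_pos hp
  have hpC : (p : ℂ) ≠ 0 := Nat.cast_ne_zero.mpr hp0.ne'
  -- the reduced exponential sum
  set g : ℕ → ℂ := fun m => ∑ j ∈ I, a j * E ((ω j : ℝ) * ((m : ℝ) * ε)) with hgdef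
  have hsdft0 : sdft a ω p 0 h = p * g 0 := by
    rw [sdft_eq a ω p hp0 0 h]
    congr 1
    refine Finset.sum_congr rfl fun j _ => ?_
    norm_num
  have hsdftm : ∀ m : ℕ, sdft a ω p ((m : ℝ) * ε) h = p * g m := fun m =>
    sdft_eq a ω p hp0 ((m : ℝ) * ε) h
  -- |g m| = |g 0| for all m ≤ M
  have habs : ∀ m : ℕ, m ≤ M → ‖g m‖ = ‖g 0‖ := by
    intro m hm
    rcases Nat.eq_zero_or_pos m with rfl | hm1
    · rfl
    · have := hcon m hm1 hm
      rw [hsdftm m, hsdft0, norm_mul, norm_mul] at this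
      have hpa : ‖(p : ℂ)‖ ≠ 0 := by
        simp [hp0.ne']
      exact mul_left_cancel₀ hpa this
  -- normSq form
  have hK : ∀ m : ℕ, m ≤ M → g m * (starRingEnd ℂ) (g m) = g 0 * (starRingEnd ℂ) (g 0) := by
    intro m hm
    rw [Complex.mul_conj, Complex.mul_conj]
    rw [← Complex.sq_norm, ← Complex.sq_norm, habs m hm]
  -- expand into pairs
  set μ : ℤ → ℂ := fun d => E ((d : ℝ) * ε) with hμdef
  have hgP : ∀ m : ℕ, g m * (starRingEnd ℂ) (g m)
      = ∑ x ∈ I ×ˢ I, (a x.1 * (starRingEnd ℂ) (a x.2)) * μ (ω x.1 - ω x.2) ^ m := by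
    intro m
    rw [hgdef]
    simp only [map_sum, map_mul, E_conj]
    rw [Finset.sum_mul_sum, ← Finset.sum_product']
    refine Finset.sum_congr rfl fun x _ => ?_
    have : E ((ω x.1 : ℝ) * ((m : ℝ) * ε)) * E (-((ω x.2 : ℝ) * ((m : ℝ) * ε)))
        = μ (ω x.1 - ω x.2) ^ m := by
      rw [← E_add, hμdef]
      show E _ = E _ ^ m
      rw [← E_nat_mul]
      congr 1
      push_cast
      ring
    rw [← this]; ring
  -- group fibers by frequency difference
  set D : Finset ℤ := (I ×ˢ I).image (fun x => ω x.1 - ω x.2) with hDdef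
  set c : ℤ → ℂ := fun d =>
    ∑ x ∈ (I ×ˢ I).filter (fun x => ω x.1 - ω x.2 = d), a x.1 * (starRingEnd ℂ) (a x.2)
    with hcdef
  have hPc : ∀ m : ℕ, (∑ x ∈ I ×ˢ I, (a x.1 * (starRingEnd ℂ) (a x.2)) * μ (ω x.1 - ω x.2) ^ m)
      = ∑ d ∈ D, c d * μ d ^ m := by
    intro m
    rw [← Finset.sum_fiberwise_of_maps_to (s := I ×ˢ I) (t := D)
      (g := fun x => ω x.1 - ω x.2) (fun x hx => Finset.mem_image_of_mem _ hx)
      (fun x : Fin k × Fin k => (a x.1 * (starRingEnd ℂ) (a x.2)) * μ (ω x.1 - ω x.2) ^ m)]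
    refine Finset.sum_congr rfl fun d _ => ?_
    rw [hcdef, Finset.sum_mul]
    refine Finset.sum_congr rfl fun x hx => ?_
    rw [(Finset.mem_filter.mp hx).2]
  set K : ℂ := g 0 * (starRingEnd ℂ) (g 0) with hKdef
  have hmain : ∀ m : ℕ, m ≤ M → ∑ d ∈ D, c d * μ d ^ m = K := by
    intro m hm
    rw [← hPc m, ← hgP m, hK m hm]
  -- injectivity of μ
  have hμinj : ∀ d1 d2 : ℤ, μ d1 = μ d2 → d1 = d2 := by
    intro d1 d2 h12
    by_contra hne
    have hone : E (((d1 - d2 : ℤ) : ℝ) * ε) = 1 := by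
      have e1 : ((d1 - d2 : ℤ) : ℝ) * ε = (d1 : ℝ) * ε + (-((d2 : ℝ) * ε)) := by
        push_cast; ring
      rw [e1, E_add]
      have h12' : E ((d1 : ℝ) * ε) = E ((d2 : ℝ) * ε) := by
        have := h12; simpa [hμdef] using this
      rw [h12', ← E_add]
      simpa using E_zero
    obtain ⟨n, hn⟩ := E_eq_one_iff.mp hone
    have hdd : (d1 : ℝ) - d2 ≠ 0 := by
      intro hc
      exact hne (by exact_mod_cast sub_eq_zero.mp hc)
    refine hε ⟨(n : ℚ) / ((d1 : ℚ) - d2), ?_⟩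
    push_cast
    rw [div_eq_iff hdd]
    push_cast at hn
    linarith [hn]
  -- extremal pair
  have hne : I.Nonempty := Finset.card_pos.mp (lt_trans one_pos hq)
  obtain ⟨jM, hjM, hmax⟩ := Finset.exists_max_image I ω hne
  obtain ⟨jm, hjm, hmin⟩ := Finset.exists_min_image I ω hne
  set d0 : ℤ := ω jM - ω jm with hd0def
  have hd0ne : d0 ≠ 0 := by
    obtain ⟨x, hx, y, hy, hxy⟩ := Finset.one_lt_card.mp hq
    intro h0
    have heq : ω jM = ω jm := by omega
    have hx' : ω x = ω jM := le_antisymm (hmax x hx) (heq ▸ hmin x hx)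
    have hy' : ω y = ω jM := le_antisymm (hmax y hy) (heq ▸ hmin y hy)
    exact hxy (hω (hx'.trans hy'.symm))
  have hfiber : (I ×ˢ I).filter (fun x => ω x.1 - ω x.2 = d0) = {(jM, jm)} := by
    ext ⟨x1, x2⟩
    simp only [Finset.mem_filter, Finset.mem_product, Finset.mem_singleton]
    constructor
    · rintro ⟨⟨h1, h2⟩, h3⟩
      have e1 : ω x1 = ω jM := by
        have := hmax x1 h1; have := hmin x2 h2; omega
      have e2 : ω x2 = ω jm := by
        have := hmax x1 h1; have := hmin x2 h2; omega
      have q1 := hω e1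
      have q2 := hω e2
      simp [Prod.ext_iff, q1, q2]
    · rintro hx
      rw [Prod.ext_iff] at hx
      obtain ⟨hx1, hx2⟩ := hx
      subst hx1; subst hx2
      exact ⟨⟨hjM, hjm⟩, rfl⟩
  have hcd0 : c d0 = a jM * (starRingEnd ℂ) (a jm) := by
    rw [hcdef]
    simp only []
    rw [hfiber]
    simp
  have hcd0ne : c d0 ≠ 0 := by
    rw [hcd0]
    exact mul_ne_zero (ha jM) (by simpa using ha jm)
  have hd0D : d0 ∈ D := by
    rw [hDdef]
    exact Finset.mem_image.mpr ⟨(jM, jm), Finset.mem_product.mpr ⟨hjM, hjm⟩, rfl⟩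
  have h0D : (0 : ℤ) ∈ D := by
    rw [hDdef]
    refine Finset.mem_image.mpr ⟨(jM, jM), Finset.mem_product.mpr ⟨hjM, hjM⟩, by simp⟩
  have hμ0 : μ 0 = 1 := by
    rw [hμdef]; simpa using E_zero
  -- modified coefficients
  set c' : ℤ → ℂ := fun d => if d = 0 then c 0 - K else c d with hc'def
  have hsum' : ∀ m : ℕ, m ≤ M → ∑ d ∈ D, c' d * μ d ^ m = 0 := by
    intro m hm
    have hterm : ∀ d ∈ D, c' d * μ d ^ m
        = c d * μ d ^ m - (if d = 0 then K * μ d ^ m else 0) := by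
      intro d _
      by_cases hd : d = 0
      · simp only [hc'def, hd, if_pos]; ring
      · simp only [hc'def, if_neg hd]; ring
    rw [Finset.sum_congr rfl hterm, Finset.sum_sub_distrib, hmain m hm]
    have : ∑ d ∈ D, (if d = 0 then K * μ d ^ m else 0) = K * μ 0 ^ m := by
      rw [Finset.sum_ite_eq' D (0 : ℤ) (fun d => K * μ d ^ m), if_pos h0D]
    rw [this, hμ0, one_pow, mul_one, sub_self]
  -- the annihilating polynomial
  set R : Polynomial ℂ := ∏ d ∈ D.erase d0, (Polynomial.X - Polynomial.C (μ d)) with hRdef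
  have hRne : ∀ d ∈ D.erase d0, (Polynomial.X - Polynomial.C (μ d)) ≠ 0 :=
    fun d _ => Polynomial.X_sub_C_ne_zero _
  have hRdeg : R.natDegree = (D.erase d0).card := by
    rw [hRdef, Polynomial.natDegree_prod _ _ hRne]
    simp [Polynomial.natDegree_X_sub_C]
  have hDcard : D.card ≤ q * q - q + 1 := by
    have hsub : D ⊆ insert 0 (I.offDiag.image (fun x => ω x.1 - ω x.2)) := by
      intro d hd
      rw [hDdef] at hd
      obtain ⟨x, hx, rfl⟩ := Finset.mem_image.mp hd
      obtain ⟨h1, h2⟩ := Finset.mem_product.mp hx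
      by_cases hxx : x.1 = x.2
      · rw [hxx]
        simp
      · exact Finset.mem_insert_of_mem
          (Finset.mem_image_of_mem _ (Finset.mem_offDiag.mpr ⟨h1, h2, hxx⟩))
    calc D.card ≤ (insert 0 (I.offDiag.image (fun x => ω x.1 - ω x.2))).card :=
          Finset.card_le_card hsub
      _ ≤ (I.offDiag.image (fun x => ω x.1 - ω x.2)).card + 1 := Finset.card_insert_le _ _
      _ ≤ I.offDiag.card + 1 := by
          exact Nat.add_le_add_right (Finset.card_image_le) 1
      _ = q * q - q + 1 := by rw [Finset.offDiag_card]
  have hdeg_le : R.natDegree ≤ M := by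
    rw [hRdeg, Finset.card_erase_of_mem hd0D, hMdef, pow_two]
    omega
  have hzero : ∀ m ∈ Finset.range (R.natDegree + 1), ∑ d ∈ D, c' d * μ d ^ m = 0 := by
    intro m hm
    exact hsum' m (le_trans (Nat.lt_succ_iff.mp (Finset.mem_range.mp hm)) hdeg_le)
  have key : ∑ d ∈ D, c' d * R.eval (μ d) = 0 := by
    calc ∑ d ∈ D, c' d * R.eval (μ d)
        = ∑ d ∈ D, c' d * ∑ m ∈ Finset.range (R.natDegree + 1), R.coeff m * μ d ^ m := by
          simp_rw [Polynomial.eval_eq_sum_range]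
      _ = ∑ m ∈ Finset.range (R.natDegree + 1), R.coeff m * ∑ d ∈ D, c' d * μ d ^ m := by
          simp_rw [Finset.mul_sum]
          rw [Finset.sum_comm]
          refine Finset.sum_congr rfl fun m _ => Finset.sum_congr rfl fun d _ => by ring
      _ = 0 := Finset.sum_eq_zero fun m hm => by rw [hzero m hm, mul_zero]
  have key2 : ∑ d ∈ D, c' d * R.eval (μ d) = c' d0 * R.eval (μ d0) := by
    refine Finset.sum_eq_single_of_mem d0 hd0D fun d hd hne' => ?_
    have : R.eval (μ d) = 0 := by
      rw [hRdef, Polynomial.eval_prod]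
      refine Finset.prod_eq_zero (Finset.mem_erase.mpr ⟨hne', hd⟩) ?_
      simp
    rw [this, mul_zero]
  have hReval : R.eval (μ d0) ≠ 0 := by
    rw [hRdef, Polynomial.eval_prod]
    rw [Finset.prod_ne_zero_iff]
    intro d hd
    simp only [Polynomial.eval_sub, Polynomial.eval_X, Polynomial.eval_C]
    rw [sub_ne_zero]
    intro hcontra
    exact (Finset.mem_erase.mp hd).1 (hμinj d0 d hcontra).symm
  have hc'd0 : c' d0 = 0 := by
    have := key2 ▸ key
    exact (mul_eq_zero.mp this).resolve_right hReval
  have : c d0 = 0 := by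
    rw [hc'def] at hc'd0
    simpa [if_neg hd0ne] using hc'd0
  exact hcd0ne this
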